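/- Let Y be a finite nonempty type, r : Y → ℝ, α > 0, and n ≥ 2 an integer. Define the Plackett–Luce probability p_PL(ys) = ∏_{k=0}^{n−2} exp(r(ys k)) / ∑_{j=k}^{n−1} exp(r(ys j)) for ys : Fin n → Y. Let D : (Fin n → Y) → ℝ satisfy D(ys) > 0 for all ys, and the Plackett–Luce consistency D(ys ∘ σ) * p_PL(ys ∘ σ') = D(ys ∘ σ') * p_PL(ys ∘ σ) for all ys and all permutations σ, σ' of Fin n. For each k with 0 ≤ k ≤ n−2, let μ_k : (Fin n → Y) → ℝ be strictly positive, and suppose μ_k(ys ∘ σ) = μ_k(ys) for every permutation σ of Fin n fixing every index j < k. Define L on the open set of functions π : Y → ℝ with strictly positive values by L(π) = −(1/α) * ∑_{ys} D(ys) * ∑_{k=0}^{n−2} μ_k(ys) * log( π(ys k)^α / ∑_{j=k}^{n−1} π(ys j)^α ), and let ρ(y) = exp(r(y)/α) / ∑_{y'} exp(r(y')/α). Then for every π with π(y) > 0 for all y, ∑_{y} π(y) = 1, and π ≠ ρ, it holds that ∑_{y} (∂L/∂π(y))(π) * (π(y) − ρ(y)) > 0. -/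

import Mathlib

open Finset

namespace SPO

variable {n : ℕ}

/-- positions `≥ k`. -/
def tl (n k : ℕ) : Finset (Fin n) := univ.filter (fun j => k ≤ (j : ℕ))

/-- permutations fixing positions `< k`. -/
def Gk (n k : ℕ) : Finset (Equiv.Perm (Fin n)) :=
  univ.filter (fun σ => ∀ j : Fin n, (j : ℕ) < k → σ j = j)

/-- tail Plackett–Luce weight of the arrangement `σ`. -/
noncomputable def Q (n k : ℕ) (w : Fin n → ℝ) (σ : Equiv.Perm (Fin n)) : ℝ :=
  ∏ m ∈ tl n k, w (σ m) / ∑ i ∈ tl n (m : ℕ), w (σ i)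

lemma mem_tl {k : ℕ} {j : Fin n} : j ∈ tl n k ↔ k ≤ (j : ℕ) := by simp [tl]

lemma mem_Gk {k : ℕ} {σ : Equiv.Perm (Fin n)} :
    σ ∈ Gk n k ↔ ∀ j : Fin n, (j : ℕ) < k → σ j = j := by simp [Gk]

lemma one_mem_Gk {k : ℕ} : (1 : Equiv.Perm (Fin n)) ∈ Gk n k := by simp [mem_Gk]

lemma Gk_apply_ge {k : ℕ} {σ : Equiv.Perm (Fin n)} (hσ : σ ∈ Gk n k) {j : Fin n}
    (hj : k ≤ (j : ℕ)) : k ≤ ((σ j : Fin n) : ℕ) := by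
  by_contra h
  push_neg at h
  have h1 : σ (σ j) = σ j := (mem_Gk.1 hσ) _ h
  have := σ.injective h1
  omega

lemma Gk_inv {k : ℕ} {σ : Equiv.Perm (Fin n)} (hσ : σ ∈ Gk n k) : σ⁻¹ ∈ Gk n k := by
  rw [mem_Gk] at hσ ⊢
  intro j hj
  have := hσ j hj
  conv_lhs => rw [← this]
  simp

lemma Gk_mem_tl_iff {k c : ℕ} (hck : c ≤ k) {σ : Equiv.Perm (Fin n)} (hσ : σ ∈ Gk n k)
    (i : Fin n) : i ∈ tl n c ↔ σ i ∈ tl n c := by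
  constructor
  · intro hi
    rw [mem_tl] at hi ⊢
    by_cases h : k ≤ (i : ℕ)
    · exact le_trans hck (Gk_apply_ge hσ h)
    · push_neg at h
      rw [mem_Gk.1 hσ i h]; exact hi
  · intro hi
    rw [mem_tl] at hi ⊢
    by_contra h
    push_neg at h
    have := mem_Gk.1 hσ i (lt_of_lt_of_le h hck)
    rw [this] at hi; omega

lemma sum_comp_tl {k c : ℕ} (hck : c ≤ k) {σ : Equiv.Perm (Fin n)} (hσ : σ ∈ Gk n k)
    (f : Fin n → ℝ) : ∑ i ∈ tl n c, f (σ i) = ∑ i ∈ tl n c, f i :=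
  Finset.sum_equiv σ (fun i => Gk_mem_tl_iff hck hσ i) (fun _ _ => rfl)


lemma tl_insert {k : ℕ} (hk : k < n) : tl n k = insert ⟨k, hk⟩ (tl n (k + 1)) := by
  ext j
  simp only [mem_tl, mem_insert, Fin.ext_iff]
  omega

lemma kf_not_mem_tl {k : ℕ} (hk : k < n) : (⟨k, hk⟩ : Fin n) ∉ tl n (k + 1) := by
  simp [mem_tl]

lemma tl_nonempty {k : ℕ} (hk : k < n) : (tl n k).Nonempty :=
  ⟨⟨k, hk⟩, by simp [mem_tl]⟩

lemma sum_tl_pos {k : ℕ} (hk : k < n) {w : Fin n → ℝ} (hw : ∀ i, 0 < w i) :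
    0 < ∑ i ∈ tl n k, w i :=
  Finset.sum_pos (fun i _ => hw i) (tl_nonempty hk)

lemma fiber_sum {k : ℕ} (hkn : k < n) (w : Fin n → ℝ) (hw : ∀ i, 0 < w i) {j : Fin n}
    (hj : j ∈ tl n k)
    (IH : ∀ w' : Fin n → ℝ, (∀ i, 0 < w' i) → ∑ σ ∈ Gk n (k + 1), Q n (k + 1) w' σ = 1) :
    ∑ σ ∈ (Gk n k).filter (fun σ => σ ⟨k, hkn⟩ = j), Q n k w σ
      = w j / ∑ i ∈ tl n k, w i := by
  have hjk : k ≤ (j : ℕ) := mem_tl.1 hj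
  set kf : Fin n := ⟨k, hkn⟩ with hkf
  have hswap : ∀ σ' : Equiv.Perm (Fin n), σ' ∈ Gk n (k + 1) →
      Equiv.swap kf j * σ' ∈ (Gk n k).filter (fun σ => σ kf = j) := by
    intro σ' hσ'
    rw [mem_filter]
    constructor
    · rw [mem_Gk]
      intro i hik
      have h1 : σ' i = i := mem_Gk.1 hσ' i (by omega)
      have h2 : i ≠ kf := by simp [Fin.ext_iff, hkf]; omega
      have h3 : i ≠ j := by simp [Fin.ext_iff]; omega
      simp [Equiv.Perm.mul_apply, h1, Equiv.swap_apply_of_ne_of_ne h2 h3]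
    · have h1 : σ' kf = kf := mem_Gk.1 hσ' kf (by simp [hkf])
      simp [Equiv.Perm.mul_apply, h1, Equiv.swap_apply_left]
  have key : ∑ σ ∈ (Gk n k).filter (fun σ => σ kf = j), Q n k w σ
      = ∑ σ' ∈ Gk n (k + 1),
          (w j / ∑ i ∈ tl n k, w i) * Q n (k + 1) (w ∘ Equiv.swap kf j) σ' := by
    refine Finset.sum_nbij' (fun σ => Equiv.swap kf j * σ) (fun σ' => Equiv.swap kf j * σ')
      ?_ ?_ ?_ ?_ ?_
    · -- maps filter → Gk (k+1)
      intro σ hσ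
      rw [mem_filter] at hσ
      obtain ⟨hσ1, hσ2⟩ := hσ
      rw [mem_Gk]
      intro i hik
      by_cases h : (i : ℕ) < k
      · have h1 : σ i = i := mem_Gk.1 hσ1 i h
        have h2 : i ≠ kf := by simp [Fin.ext_iff, hkf]; omega
        have h3 : i ≠ j := by simp [Fin.ext_iff]; omega
        simp [Equiv.Perm.mul_apply, h1, Equiv.swap_apply_of_ne_of_ne h2 h3]
      · have : i = kf := by simp [Fin.ext_iff, hkf]; omega
        subst this
        simp [Equiv.Perm.mul_apply, hσ2, Equiv.swap_apply_right]
    · exact hswap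
    · intro σ _
      show Equiv.swap kf j * (Equiv.swap kf j * σ) = σ
      rw [← mul_assoc, Equiv.swap_mul_self, one_mul]
    · intro σ' _
      show Equiv.swap kf j * (Equiv.swap kf j * σ') = σ'
      rw [← mul_assoc, Equiv.swap_mul_self, one_mul]
    · -- main pointwise identity
      intro σ hσ
      rw [mem_filter] at hσ
      obtain ⟨hσ1, hσ2⟩ := hσ
      set W := ∑ i ∈ tl n k, w i with hW
      rw [Q, show (tl n k) = insert kf (tl n (k+1)) from tl_insert hkn,
        Finset.prod_insert (kf_not_mem_tl hkn)]
      congr 1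
      · rw [hσ2]
        congr 1
        rw [hW]
        exact sum_comp_tl (le_refl k) hσ1 w
      rw [Q]
      refine Finset.prod_congr rfl (fun m _ => ?_)
      have hnum : ∀ x : Fin n, (w ∘ Equiv.swap kf j) ((Equiv.swap kf j * σ) x) = w (σ x) := by
        intro x
        simp [Equiv.Perm.mul_apply, Equiv.swap_apply_self, Function.comp]
      rw [hnum m]
      congr 1
      exact Finset.sum_congr rfl (fun i _ => (hnum i).symm)
  rw [key, ← Finset.mul_sum, IH (w ∘ Equiv.swap kf j) (fun i => hw _), mul_one]

lemma norm_aux : ∀ d k : ℕ, n ≤ k + d → ∀ w : Fin n → ℝ, (∀ i, 0 < w i) →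
    ∑ σ ∈ Gk n k, Q n k w σ = 1 := by
  intro d
  induction d with
  | zero =>
    intro k hk w hw
    have htl : tl n k = ∅ := by
      ext j; simp only [mem_tl, Finset.notMem_empty, iff_false]
      have := j.isLt; omega
    have hG : Gk n k = {1} := by
      ext σ
      simp only [mem_Gk, Finset.mem_singleton]
      constructor
      · intro h; ext i; exact congrArg Fin.val (h i (by have := i.isLt; omega))
      · intro h; subst h; simp
    rw [hG]
    simp [Q, htl]
  | succ d ih =>
    intro k hk w hw
    by_cases hnk : n ≤ k + d
    · exact ih k hnk w hw
    · push_neg at hnk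
      have hkn : k < n := by omega
      have hfib := Finset.sum_fiberwise_of_maps_to
        (g := fun σ : Equiv.Perm (Fin n) => σ ⟨k, hkn⟩) (t := tl n k)
        (fun σ hσ => mem_tl.2 (Gk_apply_ge hσ (by simp))) (Q n k w)
      rw [← hfib]
      have : ∀ j ∈ tl n k,
          ∑ σ ∈ (Gk n k).filter (fun σ => σ ⟨k, hkn⟩ = j), Q n k w σ
            = w j / ∑ i ∈ tl n k, w i := by
        intro j hj
        exact fiber_sum hkn w hw hj (fun w' hw' => ih (k + 1) (by omega) w' hw')
      rw [Finset.sum_congr rfl this, ← Finset.sum_div,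
        div_self (sum_tl_pos hkn hw).ne']

lemma norm_sum {k : ℕ} (w : Fin n → ℝ) (hw : ∀ i, 0 < w i) :
    ∑ σ ∈ Gk n k, Q n k w σ = 1 :=
  norm_aux n k (by omega) w hw

lemma select_sum {k : ℕ} (hkn : k < n) (w : Fin n → ℝ) (hw : ∀ i, 0 < w i) (h : Fin n → ℝ) :
    ∑ σ ∈ Gk n k, Q n k w σ * h (σ ⟨k, hkn⟩)
      = ∑ j ∈ tl n k, w j / (∑ i ∈ tl n k, w i) * h j := by
  have hfib := Finset.sum_fiberwise_of_maps_to
    (g := fun σ : Equiv.Perm (Fin n) => σ ⟨k, hkn⟩) (t := tl n k)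
    (fun σ hσ => mem_tl.2 (Gk_apply_ge hσ (by simp)))
    (fun σ => Q n k w σ * h (σ ⟨k, hkn⟩))
  rw [← hfib]
  refine Finset.sum_congr rfl (fun j hj => ?_)
  have : ∀ σ ∈ (Gk n k).filter (fun σ => σ ⟨k, hkn⟩ = j),
      Q n k w σ * h (σ ⟨k, hkn⟩) = Q n k w σ * h j := by
    intro σ hσ
    rw [(Finset.mem_filter.1 hσ).2]
  rw [Finset.sum_congr rfl this, ← Finset.sum_mul,
    fiber_sum hkn w hw hj (fun w' hw' => norm_sum w' hw')]


lemma cheb_core {ι : Type*} (s : Finset ι) (u v φ : ι → ℝ)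
    (hu : ∀ i ∈ s, 0 < u i) (hv : ∀ i ∈ s, 0 < v i) (hs : s.Nonempty) :
    2 * (∑ l ∈ s, u l) * (∑ l ∈ s, v l) *
        (∑ i ∈ s, (v i / (∑ l ∈ s, v l) - u i / (∑ l ∈ s, u l)) * φ i)
      = ∑ i ∈ s, ∑ l ∈ s, (v i * u l - u i * v l) * (φ i - φ l) := by
  set U := ∑ l ∈ s, u l with hUdef
  set V := ∑ l ∈ s, v l with hVdef
  have hU : 0 < U := Finset.sum_pos hu hs
  have hV : 0 < V := Finset.sum_pos hv hs
  have h2 : (∑ i ∈ s, ∑ l ∈ s, (v l * u i - u l * v i) * φ l)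
      = ∑ i ∈ s, ∑ l ∈ s, (v i * u l - u i * v l) * φ i := Finset.sum_comm
  have hA : ∑ i ∈ s, ∑ l ∈ s, (v i * u l - u i * v l) * (φ i - φ l)
      = 2 * ∑ i ∈ s, ∑ l ∈ s, (v i * u l - u i * v l) * φ i := by
    calc ∑ i ∈ s, ∑ l ∈ s, (v i * u l - u i * v l) * (φ i - φ l)
        = ∑ i ∈ s, ∑ l ∈ s,
            ((v i * u l - u i * v l) * φ i + (v l * u i - u l * v i) * φ l) := by
          refine Finset.sum_congr rfl fun i _ => Finset.sum_congr rfl fun l _ => by ring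
      _ = (∑ i ∈ s, ∑ l ∈ s, (v i * u l - u i * v l) * φ i)
          + ∑ i ∈ s, ∑ l ∈ s, (v l * u i - u l * v i) * φ l := by
          rw [← Finset.sum_add_distrib]
          refine Finset.sum_congr rfl fun i _ => ?_
          rw [← Finset.sum_add_distrib]
      _ = 2 * ∑ i ∈ s, ∑ l ∈ s, (v i * u l - u i * v l) * φ i := by rw [h2]; ring
  have hB : ∑ i ∈ s, ∑ l ∈ s, (v i * u l - u i * v l) * φ i
      = ∑ i ∈ s, (v i * U - u i * V) * φ i := by
    refine Finset.sum_congr rfl fun i _ => ?_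
    rw [← Finset.sum_mul]
    congr 1
    rw [Finset.sum_sub_distrib, ← Finset.mul_sum, ← Finset.mul_sum]
  rw [hA, hB]
  simp only [Finset.mul_sum]
  refine Finset.sum_congr rfl fun i _ => ?_
  field_simp

lemma cheb_nonneg {ι : Type*} (s : Finset ι) (u v φ : ι → ℝ)
    (hu : ∀ i ∈ s, 0 < u i) (hv : ∀ i ∈ s, 0 < v i) (hs : s.Nonempty)
    (hmono : ∀ i ∈ s, ∀ l ∈ s, 0 ≤ (v i * u l - u i * v l) * (φ i - φ l)) :
    0 ≤ ∑ i ∈ s, (v i / (∑ l ∈ s, v l) - u i / (∑ l ∈ s, u l)) * φ i := by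
  have hU : 0 < ∑ l ∈ s, u l := Finset.sum_pos hu hs
  have hV : 0 < ∑ l ∈ s, v l := Finset.sum_pos hv hs
  have key := cheb_core s u v φ hu hv hs
  have hNN : 0 ≤ ∑ i ∈ s, ∑ l ∈ s, (v i * u l - u i * v l) * (φ i - φ l) :=
    Finset.sum_nonneg fun i hi => Finset.sum_nonneg fun l hl => hmono i hi l hl
  have hpos : 0 < 2 * (∑ l ∈ s, u l) * (∑ l ∈ s, v l) := by positivity
  nlinarith [key, hNN, hpos]

lemma cheb_pos {ι : Type*} (s : Finset ι) (u v φ : ι → ℝ)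
    (hu : ∀ i ∈ s, 0 < u i) (hv : ∀ i ∈ s, 0 < v i) (hs : s.Nonempty)
    (hmono : ∀ i ∈ s, ∀ l ∈ s, 0 ≤ (v i * u l - u i * v l) * (φ i - φ l))
    (hstrict : ∃ i ∈ s, ∃ l ∈ s, 0 < (v i * u l - u i * v l) * (φ i - φ l)) :
    0 < ∑ i ∈ s, (v i / (∑ l ∈ s, v l) - u i / (∑ l ∈ s, u l)) * φ i := by
  have hU : 0 < ∑ l ∈ s, u l := Finset.sum_pos hu hs
  have hV : 0 < ∑ l ∈ s, v l := Finset.sum_pos hv hs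
  have key := cheb_core s u v φ hu hv hs
  obtain ⟨i0, hi0, l0, hl0, hstr⟩ := hstrict
  have hNN : 0 < ∑ i ∈ s, ∑ l ∈ s, (v i * u l - u i * v l) * (φ i - φ l) := by
    refine Finset.sum_pos' (fun i hi => Finset.sum_nonneg fun l hl => hmono i hi l hl)
      ⟨i0, hi0, Finset.sum_pos' (fun l hl => hmono i0 hi0 l hl) ⟨l0, hl0, hstr⟩⟩
  have hpos : 0 < 2 * (∑ l ∈ s, u l) * (∑ l ∈ s, v l) := by positivity
  nlinarith [key, hNN, hpos]

lemma sign_pair {α Z : ℝ} (hα : 0 < α) (hZ : 0 < Z) {va ua vb ub : ℝ}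
    (hva : 0 < va) (hua : 0 < ua) (hvb : 0 < vb) (hub : 0 < ub) :
    0 ≤ (va * ub - ua * vb) * ((va / ua) ^ (1 / α) / Z - (vb / ub) ^ (1 / α) / Z)
      ∧ (va * ub ≠ ua * vb →
        0 < (va * ub - ua * vb) * ((va / ua) ^ (1 / α) / Z - (vb / ub) ^ (1 / α) / Z)) := by
  have h1α : 0 < 1 / α := by positivity
  rcases lt_trichotomy (va / ua) (vb / ub) with h | h | h
  · have hr : (va / ua) ^ (1 / α) < (vb / ub) ^ (1 / α) :=
      Real.rpow_lt_rpow (by positivity) h h1α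
    have hcross : va * ub < vb * ua := (div_lt_div_iff₀ hua hub).1 h
    have hprod : 0 < (va * ub - ua * vb) * ((va / ua) ^ (1 / α) / Z - (vb / ub) ^ (1 / α) / Z) := by
      have h1 : va * ub - ua * vb < 0 := by nlinarith
      have h2 : (va / ua) ^ (1 / α) / Z - (vb / ub) ^ (1 / α) / Z < 0 :=
        sub_neg.2 (div_lt_div_of_pos_right hr hZ)
      nlinarith
    exact ⟨hprod.le, fun _ => hprod⟩
  · have hcross : va * ub = vb * ua := by
      field_simp at h
      linarith [h]
    have : (va * ub - ua * vb) = 0 := by linarith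
    rw [this, zero_mul]
    exact ⟨le_refl 0, fun hne => absurd (by linarith) hne⟩
  · have hr : (vb / ub) ^ (1 / α) < (va / ua) ^ (1 / α) :=
      Real.rpow_lt_rpow (by positivity) h h1α
    have hcross : vb * ua < va * ub := (div_lt_div_iff₀ hub hua).1 h
    have hprod : 0 < (va * ub - ua * vb) * ((va / ua) ^ (1 / α) / Z - (vb / ub) ^ (1 / α) / Z) := by
      have h1 : 0 < va * ub - ua * vb := by nlinarith
      have h2 : 0 < (va / ua) ^ (1 / α) / Z - (vb / ub) ^ (1 / α) / Z :=
        sub_pos.2 (div_lt_div_of_pos_right hr hZ)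
      nlinarith
    exact ⟨hprod.le, fun _ => hprod⟩

lemma hasDerivAt_log_div {u v : ℝ → ℝ} {u' v' t : ℝ} (hu : HasDerivAt u u' t)
    (hv : HasDerivAt v v' t) (hu0 : 0 < u t) (hv0 : 0 < v t) :
    HasDerivAt (fun s => Real.log (u s / v s)) (u' / u t - v' / v t) t := by
  have h := (hu.div hv hv0.ne').log (div_ne_zero hu0.ne' hv0.ne')
  have := hu0.ne'
  have := hv0.ne'
  convert h using 1
  · rfl
  · rw [Pi.div_apply]
    field_simp
end SPO

theorem spo_ranking_descent (Y : Type*) [Fintype Y] [Nonempty Y] [DecidableEq Y]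
    (r : Y → ℝ) (α : ℝ) (hα : 0 < α) (n : ℕ) (hn : 2 ≤ n)
    (pPL : (Fin n → Y) → ℝ)
    (hpPL : ∀ ys : Fin n → Y, pPL ys =
      ∏ k ∈ Finset.univ.filter (fun k : Fin n => (k : ℕ) < n - 1),
        Real.exp (r (ys k)) /
          ∑ j ∈ Finset.univ.filter (fun j : Fin n => k ≤ j), Real.exp (r (ys j)))
    (D : (Fin n → Y) → ℝ) (hD : ∀ ys, 0 < D ys)
    (hPL : ∀ (ys : Fin n → Y) (σ σ' : Equiv.Perm (Fin n)),
      D (ys ∘ σ) * pPL (ys ∘ σ') = D (ys ∘ σ') * pPL (ys ∘ σ))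
    (μ : Fin n → (Fin n → Y) → ℝ)
    (hμpos : ∀ k : Fin n, (k : ℕ) < n - 1 → ∀ ys, 0 < μ k ys)
    (hμsym : ∀ k : Fin n, (k : ℕ) < n - 1 → ∀ (ys : Fin n → Y)
      (σ : Equiv.Perm (Fin n)), (∀ j : Fin n, j < k → σ j = j) →
      μ k (ys ∘ σ) = μ k ys)
    (L : (Y → ℝ) → ℝ)
    (hL : ∀ p : Y → ℝ, L p = -(1 / α) *
      ∑ ys : Fin n → Y, D ys *
        ∑ k ∈ Finset.univ.filter (fun k : Fin n => (k : ℕ) < n - 1),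
          μ k ys * Real.log ((p (ys k)) ^ α /
            ∑ j ∈ Finset.univ.filter (fun j : Fin n => k ≤ j), (p (ys j)) ^ α))
    (ρ : Y → ℝ) (hρ : ∀ y, ρ y = Real.exp (r y / α) / ∑ y', Real.exp (r y' / α))
    (π : Y → ℝ) (hπ : ∀ y, 0 < π y) (hsum : ∑ y, π y = 1) (hne : π ≠ ρ) :
    0 < ∑ y, deriv (fun t : ℝ => L (Function.update π y t)) (π y) * (π y - ρ y) := by
  classical
  have hπ0 : ∀ y, π y ≠ 0 := fun y => (hπ y).ne'
  have hπα : ∀ y, 0 < π y ^ α := fun y => Real.rpow_pos_of_pos (hπ y) α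
  have hZ : 0 < ∑ y', Real.exp (r y' / α) :=
    Finset.sum_pos (fun _ _ => Real.exp_pos _) Finset.univ_nonempty
  have hρpos : ∀ y, 0 < ρ y := fun y => by rw [hρ]; positivity
  have htl : ∀ k : Fin n, Finset.univ.filter (fun j : Fin n => k ≤ j) = SPO.tl n (k : ℕ) := by
    intro k; ext j
    simp only [SPO.tl, Finset.mem_filter, Finset.mem_univ, true_and, Fin.le_def]
  have hSpos : ∀ (ys : Fin n → Y) (k : Fin n), 0 < ∑ j ∈ SPO.tl n (k : ℕ), π (ys j) ^ α :=
    fun ys k => SPO.sum_tl_pos k.isLt (fun i => hπα (ys i))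
  have hEpos : ∀ (ys : Fin n → Y) (k : Fin n),
      0 < ∑ j ∈ SPO.tl n (k : ℕ), Real.exp (r (ys j)) :=
    fun ys k => SPO.sum_tl_pos k.isLt (fun i => Real.exp_pos _)
  have hpPLpos : ∀ ys, 0 < pPL ys := by
    intro ys
    rw [hpPL ys]
    refine Finset.prod_pos (fun m hm => div_pos (Real.exp_pos _) ?_)
    rw [htl m]
    exact SPO.sum_tl_pos m.isLt (fun i => Real.exp_pos _)
  have hcancel : ∀ x : ℝ, 0 < x → (x ^ α) ^ (1 / α) = x := fun x hx => by
    rw [← Real.rpow_mul hx.le, mul_one_div, div_self hα.ne', Real.rpow_one]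
  have hexp : ∀ t : ℝ, (Real.exp t) ^ (1 / α) = Real.exp (t / α) := fun t => by
    rw [← Real.exp_mul, mul_one_div]
  -- the function φ appearing in the Chebyshev argument
  have hφ : ∀ z : Y, ρ z / π z
      = (Real.exp (r z) / π z ^ α) ^ (1 / α) / (∑ y', Real.exp (r y' / α)) := by
    intro z
    have h1 : (Real.exp (r z) / π z ^ α) ^ (1 / α) = Real.exp (r z / α) / π z := by
      rw [Real.div_rpow (Real.exp_pos _).le (hπα z).le, hexp, hcancel _ (hπ z)]
    rw [h1, hρ]
    rw [div_div, div_div, mul_comm]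
  -- pointwise sign facts
  have hsign : ∀ a b : Y,
      0 ≤ (Real.exp (r a) * π b ^ α - π a ^ α * Real.exp (r b)) * (ρ a / π a - ρ b / π b) := by
    intro a b
    rw [hφ a, hφ b]
    exact (SPO.sign_pair hα hZ (Real.exp_pos _) (hπα a) (Real.exp_pos _) (hπα b)).1
  have hsign' : ∀ a b : Y, Real.exp (r a) * π b ^ α ≠ π a ^ α * Real.exp (r b) →
      0 < (Real.exp (r a) * π b ^ α - π a ^ α * Real.exp (r b)) * (ρ a / π a - ρ b / π b) := by
    intro a b hab
    rw [hφ a, hφ b]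
    exact (SPO.sign_pair hα hZ (Real.exp_pos _) (hπα a) (Real.exp_pos _) (hπα b)).2 hab
  -- existence of a "non-proportional" pair of responses
  have hex : ∃ a b : Y, Real.exp (r a) * π b ^ α ≠ π a ^ α * Real.exp (r b) := by
    by_contra hcon
    push_neg at hcon
    apply hne
    funext z
    have hrel : ∀ a b : Y, Real.exp (r a / α) * π b = Real.exp (r b / α) * π a := by
      intro a b
      have h := hcon a b
      have h2 := congrArg (fun x : ℝ => x ^ (1 / α)) h
      rw [Real.mul_rpow (Real.exp_pos _).le (hπα b).le,
        Real.mul_rpow (hπα a).le (Real.exp_pos _).le, hexp, hexp,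
        hcancel _ (hπ b), hcancel _ (hπ a)] at h2
      linear_combination h2
    have hsum2 : Real.exp (r z / α) * (∑ w, π w) = (∑ w, Real.exp (r w / α)) * π z := by
      rw [Finset.mul_sum, Finset.sum_mul]
      exact Finset.sum_congr rfl fun w _ => hrel z w
    rw [hsum, mul_one] at hsum2
    rw [hρ, hsum2, mul_comm, mul_div_assoc, div_self hZ.ne', mul_one]
  -- Stage 1: the partial derivatives of L
  have hupdate : ∀ (y z : Y), (if z = y then π y else π z) = π z := by
    intro y z; split
    · next h => rw [h]
    · rfl
  have hud : ∀ (y z : Y), HasDerivAt (fun t : ℝ => (if z = y then t else π z) ^ α)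
      (if z = y then α * π y ^ (α - 1) else 0) (π y) := by
    intro y z
    by_cases h : z = y
    · simp only [h, if_true]
      exact Real.hasDerivAt_rpow_const (Or.inl (hπ0 y))
    · simp only [h, if_false]
      exact hasDerivAt_const _ _
  have hA : ∀ y : Y, HasDerivAt (fun t => L (Function.update π y t))
      (-(1 / α) * ∑ ys : Fin n → Y, D ys *
        ∑ k ∈ Finset.univ.filter (fun k : Fin n => (k : ℕ) < n - 1), μ k ys *
          ((if ys k = y then α * π y ^ (α - 1) else 0) / π (ys k) ^ α
            - (∑ j ∈ SPO.tl n (k : ℕ), if ys j = y then α * π y ^ (α - 1) else 0)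
              / ∑ j ∈ SPO.tl n (k : ℕ), π (ys j) ^ α)) (π y) := by
    intro y
    have hfun : (fun t => L (Function.update π y t)) = fun t =>
        -(1 / α) * ∑ ys : Fin n → Y, D ys *
          ∑ k ∈ Finset.univ.filter (fun k : Fin n => (k : ℕ) < n - 1), μ k ys *
            Real.log ((if ys k = y then t else π (ys k)) ^ α
              / ∑ j ∈ SPO.tl n (k : ℕ), (if ys j = y then t else π (ys j)) ^ α) := by
      funext t
      rw [hL]
      simp only [Function.update_apply, htl]
    rw [hfun]
    refine HasDerivAt.const_mul _ (HasDerivAt.fun_sum fun ys _ => HasDerivAt.const_mul _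
      (HasDerivAt.fun_sum fun k _ => HasDerivAt.const_mul _ ?_))
    have hlog := SPO.hasDerivAt_log_div (u := fun t : ℝ => (if ys k = y then t else π (ys k)) ^ α)
      (v := fun t : ℝ => ∑ j ∈ SPO.tl n (k : ℕ), (if ys j = y then t else π (ys j)) ^ α)
      (hud y (ys k)) (HasDerivAt.fun_sum fun j _ => hud y (ys j)) ?_ ?_
    · simpa only [hupdate] using hlog
    · simp only [hupdate y (ys k)]
      exact hπα (ys k)
    · simp only [hupdate]
      exact hSpos ys k
  -- Stage 2: algebraic form of the descent quantity
  have hval0 : ∀ z : Y, α * π z ^ (α - 1) * (π z - ρ z) = α * (π z ^ α * (1 - ρ z / π z)) := by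
    intro z
    have hz0 := hπ0 z
    rw [Real.rpow_sub_one hz0]
    field_simp
  have hsum1 : ∀ (ys : Fin n → Y) (k : Fin n),
      ∑ y, (if ys k = y then α * π y ^ (α - 1) else 0) / π (ys k) ^ α * (π y - ρ y)
        = α * (1 - ρ (ys k) / π (ys k)) := by
    intro ys k
    have hstep : ∀ y, (if ys k = y then α * π y ^ (α - 1) else 0) / π (ys k) ^ α * (π y - ρ y)
        = if ys k = y then α * π y ^ (α - 1) * (π y - ρ y) / π (ys k) ^ α else 0 := by
      intro y; split
      · ring
      · simp
    rw [Finset.sum_congr rfl (fun y _ => hstep y), Finset.sum_ite_eq, if_pos (Finset.mem_univ _),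
      hval0 (ys k)]
    rw [mul_div_assoc, mul_comm (π (ys k) ^ α), mul_div_assoc,
      div_self (hπα (ys k)).ne', mul_one]
  have hsum2 : ∀ (ys : Fin n → Y) (k : Fin n),
      ∑ y, (∑ j ∈ SPO.tl n (k : ℕ), if ys j = y then α * π y ^ (α - 1) else 0)
          / (∑ i ∈ SPO.tl n (k : ℕ), π (ys i) ^ α) * (π y - ρ y)
        = α * ∑ j ∈ SPO.tl n (k : ℕ),
            π (ys j) ^ α / (∑ i ∈ SPO.tl n (k : ℕ), π (ys i) ^ α)
              * (1 - ρ (ys j) / π (ys j)) := by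
    intro ys k
    have h1 : ∀ y, (∑ j ∈ SPO.tl n (k : ℕ), if ys j = y then α * π y ^ (α - 1) else 0)
          / (∑ i ∈ SPO.tl n (k : ℕ), π (ys i) ^ α) * (π y - ρ y)
        = ∑ j ∈ SPO.tl n (k : ℕ), (if ys j = y then
            α * π y ^ (α - 1) * (π y - ρ y) / (∑ i ∈ SPO.tl n (k : ℕ), π (ys i) ^ α) else 0) := by
      intro y
      rw [Finset.sum_div, Finset.sum_mul]
      refine Finset.sum_congr rfl fun j _ => ?_
      split
      · ring
      · simp
    rw [Finset.sum_congr rfl (fun y _ => h1 y), Finset.sum_comm, Finset.mul_sum]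
    refine Finset.sum_congr rfl fun j _ => ?_
    rw [Finset.sum_ite_eq, if_pos (Finset.mem_univ _), hval0 (ys j)]
    ring
  have key2 : (∑ y, (-(1 / α) * ∑ ys : Fin n → Y, D ys *
        ∑ k ∈ Finset.univ.filter (fun k : Fin n => (k : ℕ) < n - 1), μ k ys *
          ((if ys k = y then α * π y ^ (α - 1) else 0) / π (ys k) ^ α
            - (∑ j ∈ SPO.tl n (k : ℕ), if ys j = y then α * π y ^ (α - 1) else 0)
              / ∑ j ∈ SPO.tl n (k : ℕ), π (ys j) ^ α)) * (π y - ρ y))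
      = ∑ k ∈ Finset.univ.filter (fun k : Fin n => (k : ℕ) < n - 1), ∑ ys : Fin n → Y,
          D ys * μ k ys *
            ((∑ j ∈ SPO.tl n (k : ℕ), π (ys j) ^ α / (∑ i ∈ SPO.tl n (k : ℕ), π (ys i) ^ α)
                * (1 - ρ (ys j) / π (ys j))) - (1 - ρ (ys k) / π (ys k))) := by
    calc (∑ y, (-(1 / α) * ∑ ys : Fin n → Y, D ys *
        ∑ k ∈ Finset.univ.filter (fun k : Fin n => (k : ℕ) < n - 1), μ k ys *
          ((if ys k = y then α * π y ^ (α - 1) else 0) / π (ys k) ^ α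
            - (∑ j ∈ SPO.tl n (k : ℕ), if ys j = y then α * π y ^ (α - 1) else 0)
              / ∑ j ∈ SPO.tl n (k : ℕ), π (ys j) ^ α)) * (π y - ρ y))
        = ∑ y, ∑ ys : Fin n → Y,
            ∑ k ∈ Finset.univ.filter (fun k : Fin n => (k : ℕ) < n - 1),
            -(1 / α) * D ys * μ k ys *
              (((if ys k = y then α * π y ^ (α - 1) else 0) / π (ys k) ^ α
                - (∑ j ∈ SPO.tl n (k : ℕ), if ys j = y then α * π y ^ (α - 1) else 0)
                  / ∑ j ∈ SPO.tl n (k : ℕ), π (ys j) ^ α) * (π y - ρ y)) := by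
          refine Finset.sum_congr rfl fun y _ => ?_
          simp only [Finset.mul_sum, Finset.sum_mul]
          exact Finset.sum_congr rfl fun ys _ => Finset.sum_congr rfl fun k _ => by ring
      _ = ∑ ys : Fin n → Y, ∑ k ∈ Finset.univ.filter (fun k : Fin n => (k : ℕ) < n - 1), ∑ y,
            -(1 / α) * D ys * μ k ys *
              (((if ys k = y then α * π y ^ (α - 1) else 0) / π (ys k) ^ α
                - (∑ j ∈ SPO.tl n (k : ℕ), if ys j = y then α * π y ^ (α - 1) else 0)
                  / ∑ j ∈ SPO.tl n (k : ℕ), π (ys j) ^ α) * (π y - ρ y)) := by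
          rw [Finset.sum_comm]
          exact Finset.sum_congr rfl fun ys _ => Finset.sum_comm
      _ = ∑ ys : Fin n → Y, ∑ k ∈ Finset.univ.filter (fun k : Fin n => (k : ℕ) < n - 1),
            D ys * μ k ys *
            ((∑ j ∈ SPO.tl n (k : ℕ), π (ys j) ^ α / (∑ i ∈ SPO.tl n (k : ℕ), π (ys i) ^ α)
                * (1 - ρ (ys j) / π (ys j))) - (1 - ρ (ys k) / π (ys k))) := by
          refine Finset.sum_congr rfl fun ys _ => Finset.sum_congr rfl fun k _ => ?_
          rw [← Finset.mul_sum]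
          have hinner : (∑ y, ((if ys k = y then α * π y ^ (α - 1) else 0) / π (ys k) ^ α
                - (∑ j ∈ SPO.tl n (k : ℕ), if ys j = y then α * π y ^ (α - 1) else 0)
                  / ∑ j ∈ SPO.tl n (k : ℕ), π (ys j) ^ α) * (π y - ρ y))
              = α * (1 - ρ (ys k) / π (ys k))
                - α * ∑ j ∈ SPO.tl n (k : ℕ),
                    π (ys j) ^ α / (∑ i ∈ SPO.tl n (k : ℕ), π (ys i) ^ α)
                      * (1 - ρ (ys j) / π (ys j)) := by
            rw [← hsum1 ys k, ← hsum2 ys k, ← Finset.sum_sub_distrib]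
            exact Finset.sum_congr rfl fun y _ => by ring
          rw [hinner]
          field_simp
          ring
      _ = _ := Finset.sum_comm
  -- rewrite the goal using the derivative computation and key2
  have hgoal : (∑ y, deriv (fun t : ℝ => L (Function.update π y t)) (π y) * (π y - ρ y))
      = ∑ k ∈ Finset.univ.filter (fun k : Fin n => (k : ℕ) < n - 1), ∑ ys : Fin n → Y,
          D ys * μ k ys *
            ((∑ j ∈ SPO.tl n (k : ℕ), π (ys j) ^ α / (∑ i ∈ SPO.tl n (k : ℕ), π (ys i) ^ α)
                * (1 - ρ (ys j) / π (ys j))) - (1 - ρ (ys k) / π (ys k))) := by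
    rw [← key2]
    exact Finset.sum_congr rfl fun y _ => by rw [(hA y).deriv]
  rw [hgoal]
  -- Stage 3: symmetrization over permutations fixing the first k positions
  have hn0 : 0 < n := by omega
  have hbij : ∀ σ : Equiv.Perm (Fin n), Function.Bijective (fun ys : Fin n → Y => ys ∘ ⇑σ) := by
    intro σ
    constructor
    · intro f g hfg
      funext i
      have := congrFun hfg (σ⁻¹ i)
      simpa using this
    · intro f
      exact ⟨f ∘ ⇑σ⁻¹, by funext i; simp⟩
  have hD' : ∀ (ys : Fin n → Y) (σ : Equiv.Perm (Fin n)),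
      D (ys ∘ ⇑σ) = D ys * pPL (ys ∘ ⇑σ) / pPL ys := by
    intro ys σ
    have h := hPL ys σ 1
    have h1 : ys ∘ ⇑(1 : Equiv.Perm (Fin n)) = ys := by funext i; simp
    rw [h1] at h
    rw [eq_div_iff (hpPLpos ys).ne']
    exact h
  have hdecomp : ∀ (k : Fin n), ∀ (ys : Fin n → Y), ∀ σ ∈ SPO.Gk n (k : ℕ),
      pPL (ys ∘ ⇑σ) = (∏ m ∈ Finset.univ.filter (fun m : Fin n => (m : ℕ) < (k : ℕ)),
          Real.exp (r (ys m)) / ∑ i ∈ SPO.tl n (m : ℕ), Real.exp (r (ys i)))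
        * SPO.Q n (k : ℕ) (fun i => Real.exp (r (ys i))) σ := by
    intro k ys σ hσ
    rw [hpPL (ys ∘ ⇑σ)]
    simp only [Function.comp_apply, htl]
    rw [← Finset.prod_filter_mul_prod_filter_not
      (Finset.univ.filter (fun m : Fin n => (m : ℕ) < n - 1)) (fun m : Fin n => (m : ℕ) < (k : ℕ))]
    congr 1
    · rw [show (Finset.univ.filter (fun m : Fin n => (m : ℕ) < n - 1)).filter
          (fun m : Fin n => (m : ℕ) < (k : ℕ))
          = Finset.univ.filter (fun m : Fin n => (m : ℕ) < (k : ℕ)) from by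
        ext m
        simp only [Finset.mem_filter, Finset.mem_univ, true_and]
        have := k.isLt
        omega]
      refine Finset.prod_congr rfl fun m hm => ?_
      rw [Finset.mem_filter] at hm
      rw [SPO.mem_Gk.1 hσ m (by simpa using hm.2)]
      congr 1
      exact SPO.sum_comp_tl (le_of_lt (by simpa using hm.2)) hσ
        (fun i => Real.exp (r (ys i)))
    · rw [SPO.Q]
      have hset : SPO.tl n (k : ℕ) = insert (⟨n - 1, by omega⟩ : Fin n)
          ((Finset.univ.filter (fun m : Fin n => (m : ℕ) < n - 1)).filter
            (fun m : Fin n => ¬ (m : ℕ) < (k : ℕ))) := by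
        ext m
        simp only [SPO.mem_tl, Finset.mem_insert, Finset.mem_filter, Finset.mem_univ,
          true_and, Fin.ext_iff]
        have h1 := m.isLt
        have h2 := k.isLt
        constructor
        · intro h; omega
        · intro h; omega
      rw [hset, Finset.prod_insert (by simp)]
      have hlast : ∑ i ∈ SPO.tl n (((⟨n - 1, by omega⟩ : Fin n)) : ℕ),
          Real.exp (r (ys (σ i))) = Real.exp (r (ys (σ (⟨n - 1, by omega⟩ : Fin n)))) := by
        rw [show SPO.tl n (((⟨n - 1, by omega⟩ : Fin n)) : ℕ)
            = {(⟨n - 1, by omega⟩ : Fin n)} from by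
          ext m
          simp only [SPO.mem_tl, Finset.mem_singleton, Fin.ext_iff]
          have := m.isLt
          omega]
        rw [Finset.sum_singleton]
      rw [hlast, div_self (Real.exp_pos _).ne', one_mul]
  have hreidx : ∀ (k : Fin n), (k : ℕ) < n - 1 → ∀ σ ∈ SPO.Gk n (k : ℕ),
      (∑ ys : Fin n → Y, D ys * μ k ys *
        ((∑ j ∈ SPO.tl n (k : ℕ), π (ys j) ^ α / (∑ i ∈ SPO.tl n (k : ℕ), π (ys i) ^ α)
            * (1 - ρ (ys j) / π (ys j))) - (1 - ρ (ys k) / π (ys k))))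
      = ∑ ys : Fin n → Y, D ys * μ k ys / pPL ys *
          (pPL (ys ∘ ⇑σ) *
            ((∑ j ∈ SPO.tl n (k : ℕ), π (ys j) ^ α / (∑ i ∈ SPO.tl n (k : ℕ), π (ys i) ^ α)
                * (1 - ρ (ys j) / π (ys j))) - (1 - ρ (ys (σ k)) / π (ys (σ k))))) := by
    intro k hk σ hσ
    symm
    refine Fintype.sum_bijective (fun ys : Fin n → Y => ys ∘ ⇑σ) (hbij σ) _ _ (fun ys => ?_)
    show _ = D (ys ∘ ⇑σ) * μ k (ys ∘ ⇑σ) * _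
    rw [hD' ys σ, hμsym k hk ys σ (fun j hj => SPO.mem_Gk.1 hσ j hj)]
    simp only [Function.comp_apply]
    rw [SPO.sum_comp_tl (le_refl (k : ℕ)) hσ (fun j => π (ys j) ^ α)]
    rw [SPO.sum_comp_tl (le_refl (k : ℕ)) hσ
      (fun j => π (ys j) ^ α / (∑ i ∈ SPO.tl n (k : ℕ), π (ys i) ^ α)
        * (1 - ρ (ys j) / π (ys j)))]
    ring
  have hTform : ∀ (k : Fin n), (k : ℕ) < n - 1 →
      ((SPO.Gk n (k : ℕ)).card : ℝ) * (∑ ys : Fin n → Y, D ys * μ k ys *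
        ((∑ j ∈ SPO.tl n (k : ℕ), π (ys j) ^ α / (∑ i ∈ SPO.tl n (k : ℕ), π (ys i) ^ α)
            * (1 - ρ (ys j) / π (ys j))) - (1 - ρ (ys k) / π (ys k))))
      = ∑ ys : Fin n → Y, (D ys * μ k ys / pPL ys *
          ∏ m ∈ Finset.univ.filter (fun m : Fin n => (m : ℕ) < (k : ℕ)),
            Real.exp (r (ys m)) / ∑ i ∈ SPO.tl n (m : ℕ), Real.exp (r (ys i)))
        * ∑ j ∈ SPO.tl n (k : ℕ),
            (Real.exp (r (ys j)) / (∑ i ∈ SPO.tl n (k : ℕ), Real.exp (r (ys i)))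
              - π (ys j) ^ α / (∑ i ∈ SPO.tl n (k : ℕ), π (ys i) ^ α))
              * (ρ (ys j) / π (ys j)) := by
    intro k hk
    calc ((SPO.Gk n (k : ℕ)).card : ℝ) * (∑ ys : Fin n → Y, D ys * μ k ys *
        ((∑ j ∈ SPO.tl n (k : ℕ), π (ys j) ^ α / (∑ i ∈ SPO.tl n (k : ℕ), π (ys i) ^ α)
            * (1 - ρ (ys j) / π (ys j))) - (1 - ρ (ys k) / π (ys k))))
        = ∑ σ ∈ SPO.Gk n (k : ℕ), ∑ ys : Fin n → Y, D ys * μ k ys *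
            ((∑ j ∈ SPO.tl n (k : ℕ), π (ys j) ^ α / (∑ i ∈ SPO.tl n (k : ℕ), π (ys i) ^ α)
                * (1 - ρ (ys j) / π (ys j))) - (1 - ρ (ys k) / π (ys k))) := by
          rw [Finset.sum_const, nsmul_eq_mul]
      _ = ∑ σ ∈ SPO.Gk n (k : ℕ), ∑ ys : Fin n → Y, D ys * μ k ys / pPL ys *
            (pPL (ys ∘ ⇑σ) *
              ((∑ j ∈ SPO.tl n (k : ℕ), π (ys j) ^ α / (∑ i ∈ SPO.tl n (k : ℕ), π (ys i) ^ α)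
                  * (1 - ρ (ys j) / π (ys j))) - (1 - ρ (ys (σ k)) / π (ys (σ k))))) :=
          Finset.sum_congr rfl (fun σ hσ => hreidx k hk σ hσ)
      _ = ∑ ys : Fin n → Y, ∑ σ ∈ SPO.Gk n (k : ℕ), D ys * μ k ys / pPL ys *
            (pPL (ys ∘ ⇑σ) *
              ((∑ j ∈ SPO.tl n (k : ℕ), π (ys j) ^ α / (∑ i ∈ SPO.tl n (k : ℕ), π (ys i) ^ α)
                  * (1 - ρ (ys j) / π (ys j))) - (1 - ρ (ys (σ k)) / π (ys (σ k))))) :=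
          Finset.sum_comm
      _ = ∑ ys : Fin n → Y, ∑ σ ∈ SPO.Gk n (k : ℕ),
            (D ys * μ k ys / pPL ys *
              ∏ m ∈ Finset.univ.filter (fun m : Fin n => (m : ℕ) < (k : ℕ)),
                Real.exp (r (ys m)) / ∑ i ∈ SPO.tl n (m : ℕ), Real.exp (r (ys i)))
            * (SPO.Q n (k : ℕ) (fun i => Real.exp (r (ys i))) σ *
              ((∑ j ∈ SPO.tl n (k : ℕ), π (ys j) ^ α / (∑ i ∈ SPO.tl n (k : ℕ), π (ys i) ^ α)
                  * (1 - ρ (ys j) / π (ys j))) - (1 - ρ (ys (σ k)) / π (ys (σ k))))) := by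
          refine Finset.sum_congr rfl fun ys _ => Finset.sum_congr rfl fun σ hσ => ?_
          rw [hdecomp k ys σ hσ]
          ring
      _ = ∑ ys : Fin n → Y,
            (D ys * μ k ys / pPL ys *
              ∏ m ∈ Finset.univ.filter (fun m : Fin n => (m : ℕ) < (k : ℕ)),
                Real.exp (r (ys m)) / ∑ i ∈ SPO.tl n (m : ℕ), Real.exp (r (ys i)))
            * ∑ σ ∈ SPO.Gk n (k : ℕ),
                SPO.Q n (k : ℕ) (fun i => Real.exp (r (ys i))) σ *
                ((∑ j ∈ SPO.tl n (k : ℕ), π (ys j) ^ α / (∑ i ∈ SPO.tl n (k : ℕ), π (ys i) ^ α)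
                    * (1 - ρ (ys j) / π (ys j))) - (1 - ρ (ys (σ k)) / π (ys (σ k)))) :=
          Finset.sum_congr rfl fun ys _ => (Finset.mul_sum _ _ _).symm
      _ = ∑ ys : Fin n → Y,
            (D ys * μ k ys / pPL ys *
              ∏ m ∈ Finset.univ.filter (fun m : Fin n => (m : ℕ) < (k : ℕ)),
                Real.exp (r (ys m)) / ∑ i ∈ SPO.tl n (m : ℕ), Real.exp (r (ys i)))
            * ∑ j ∈ SPO.tl n (k : ℕ),
                Real.exp (r (ys j)) / (∑ i ∈ SPO.tl n (k : ℕ), Real.exp (r (ys i))) *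
                ((∑ j' ∈ SPO.tl n (k : ℕ), π (ys j') ^ α / (∑ i ∈ SPO.tl n (k : ℕ), π (ys i) ^ α)
                    * (1 - ρ (ys j') / π (ys j'))) - (1 - ρ (ys j) / π (ys j))) := by
          refine Finset.sum_congr rfl fun ys _ => ?_
          congr 1
          have hsel := SPO.select_sum (n := n) k.isLt (fun i => Real.exp (r (ys i)))
            (fun i => Real.exp_pos _)
            (fun j => (∑ j' ∈ SPO.tl n (k : ℕ),
                π (ys j') ^ α / (∑ i ∈ SPO.tl n (k : ℕ), π (ys i) ^ α)
                  * (1 - ρ (ys j') / π (ys j'))) - (1 - ρ (ys j) / π (ys j)))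
          simp only [Fin.eta] at hsel
          exact hsel
      _ = _ := by
          refine Finset.sum_congr rfl fun ys _ => ?_
          congr 1
          have hVE : (∑ j ∈ SPO.tl n (k : ℕ),
              Real.exp (r (ys j)) / (∑ i ∈ SPO.tl n (k : ℕ), Real.exp (r (ys i)))) = 1 := by
            rw [← Finset.sum_div, div_self (hEpos ys k).ne']
          have hUS : (∑ j ∈ SPO.tl n (k : ℕ),
              π (ys j) ^ α / (∑ i ∈ SPO.tl n (k : ℕ), π (ys i) ^ α)) = 1 := by
            rw [← Finset.sum_div, div_self (hSpos ys k).ne']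
          calc ∑ j ∈ SPO.tl n (k : ℕ),
                Real.exp (r (ys j)) / (∑ i ∈ SPO.tl n (k : ℕ), Real.exp (r (ys i))) *
                ((∑ j' ∈ SPO.tl n (k : ℕ), π (ys j') ^ α /
                    (∑ i ∈ SPO.tl n (k : ℕ), π (ys i) ^ α) * (1 - ρ (ys j') / π (ys j')))
                  - (1 - ρ (ys j) / π (ys j)))
              = (∑ j ∈ SPO.tl n (k : ℕ),
                  Real.exp (r (ys j)) / (∑ i ∈ SPO.tl n (k : ℕ), Real.exp (r (ys i)))) *
                (∑ j' ∈ SPO.tl n (k : ℕ), π (ys j') ^ α /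
                    (∑ i ∈ SPO.tl n (k : ℕ), π (ys i) ^ α) * (1 - ρ (ys j') / π (ys j')))
                - ∑ j ∈ SPO.tl n (k : ℕ),
                    Real.exp (r (ys j)) / (∑ i ∈ SPO.tl n (k : ℕ), Real.exp (r (ys i))) *
                      (1 - ρ (ys j) / π (ys j)) := by
                rw [Finset.sum_mul, ← Finset.sum_sub_distrib]
                exact Finset.sum_congr rfl fun j _ => by ring
            _ = ∑ j ∈ SPO.tl n (k : ℕ),
                  (π (ys j) ^ α / (∑ i ∈ SPO.tl n (k : ℕ), π (ys i) ^ α)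
                      * (1 - ρ (ys j) / π (ys j))
                    - Real.exp (r (ys j)) / (∑ i ∈ SPO.tl n (k : ℕ), Real.exp (r (ys i))) *
                      (1 - ρ (ys j) / π (ys j))) := by
                rw [hVE, one_mul, Finset.sum_sub_distrib]
            _ = ∑ j ∈ SPO.tl n (k : ℕ),
                  ((π (ys j) ^ α / (∑ i ∈ SPO.tl n (k : ℕ), π (ys i) ^ α)
                    - Real.exp (r (ys j)) / (∑ i ∈ SPO.tl n (k : ℕ), Real.exp (r (ys i))))
                  + (Real.exp (r (ys j)) / (∑ i ∈ SPO.tl n (k : ℕ), Real.exp (r (ys i)))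
                    - π (ys j) ^ α / (∑ i ∈ SPO.tl n (k : ℕ), π (ys i) ^ α))
                      * (ρ (ys j) / π (ys j))) :=
                Finset.sum_congr rfl fun j _ => by ring
            _ = _ := by
                rw [Finset.sum_add_distrib, Finset.sum_sub_distrib, hUS, hVE]
                ring
  -- positivity of the coefficients and nonnegativity of the Chebyshev sums
  have hCoeff : ∀ (k : Fin n) (ys : Fin n → Y), (k : ℕ) < n - 1 →
      0 < D ys * μ k ys / pPL ys *
        ∏ m ∈ Finset.univ.filter (fun m : Fin n => (m : ℕ) < (k : ℕ)),
          Real.exp (r (ys m)) / ∑ i ∈ SPO.tl n (m : ℕ), Real.exp (r (ys i)) := by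
    intro k ys hk
    refine mul_pos (div_pos (mul_pos (hD ys) (hμpos k hk ys)) (hpPLpos ys))
      (Finset.prod_pos fun m _ => div_pos (Real.exp_pos _)
        (SPO.sum_tl_pos m.isLt fun i => Real.exp_pos _))
  have hChebNN : ∀ (k : Fin n) (ys : Fin n → Y),
      0 ≤ ∑ j ∈ SPO.tl n (k : ℕ),
          (Real.exp (r (ys j)) / (∑ i ∈ SPO.tl n (k : ℕ), Real.exp (r (ys i)))
            - π (ys j) ^ α / (∑ i ∈ SPO.tl n (k : ℕ), π (ys i) ^ α))
            * (ρ (ys j) / π (ys j)) := by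
    intro k ys
    exact SPO.cheb_nonneg (SPO.tl n (k : ℕ)) (fun j => π (ys j) ^ α)
      (fun j => Real.exp (r (ys j))) (fun j => ρ (ys j) / π (ys j))
      (fun j _ => hπα (ys j)) (fun j _ => Real.exp_pos _) (SPO.tl_nonempty k.isLt)
      (fun i _ l _ => hsign (ys i) (ys l))
  have hGcard : ∀ k : ℕ, (0 : ℝ) < ((SPO.Gk n k).card : ℝ) := by
    intro k
    exact_mod_cast Finset.card_pos.2 ⟨1, SPO.one_mem_Gk⟩
  have hTnn : ∀ k ∈ Finset.univ.filter (fun k : Fin n => (k : ℕ) < n - 1),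
      0 ≤ ∑ ys : Fin n → Y, D ys * μ k ys *
        ((∑ j ∈ SPO.tl n (k : ℕ), π (ys j) ^ α / (∑ i ∈ SPO.tl n (k : ℕ), π (ys i) ^ α)
            * (1 - ρ (ys j) / π (ys j))) - (1 - ρ (ys k) / π (ys k))) := by
    intro k hkmem
    have hk : (k : ℕ) < n - 1 := (Finset.mem_filter.1 hkmem).2
    have h1 := hTform k hk
    have h2 : 0 ≤ ∑ ys : Fin n → Y, (D ys * μ k ys / pPL ys *
          ∏ m ∈ Finset.univ.filter (fun m : Fin n => (m : ℕ) < (k : ℕ)),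
            Real.exp (r (ys m)) / ∑ i ∈ SPO.tl n (m : ℕ), Real.exp (r (ys i)))
        * ∑ j ∈ SPO.tl n (k : ℕ),
            (Real.exp (r (ys j)) / (∑ i ∈ SPO.tl n (k : ℕ), Real.exp (r (ys i)))
              - π (ys j) ^ α / (∑ i ∈ SPO.tl n (k : ℕ), π (ys i) ^ α))
              * (ρ (ys j) / π (ys j)) :=
      Finset.sum_nonneg fun ys _ => mul_nonneg (hCoeff k ys hk).le (hChebNN k ys)
    by_contra hneg
    push_neg at hneg
    nlinarith [hGcard (k : ℕ), h1, h2]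
  -- strict positivity at k = 0
  obtain ⟨a, b, hab⟩ := hex
  have hk0lt : (0 : ℕ) < n - 1 := by omega
  have hk0mem : (⟨0, hn0⟩ : Fin n) ∈ Finset.univ.filter (fun k : Fin n => (k : ℕ) < n - 1) := by
    simp only [Finset.mem_filter, Finset.mem_univ, true_and]
    exact hk0lt
  have hT0 : 0 < ∑ ys : Fin n → Y, D ys * μ (⟨0, hn0⟩ : Fin n) ys *
      ((∑ j ∈ SPO.tl n ((⟨0, hn0⟩ : Fin n) : ℕ),
          π (ys j) ^ α / (∑ i ∈ SPO.tl n ((⟨0, hn0⟩ : Fin n) : ℕ), π (ys i) ^ α)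
            * (1 - ρ (ys j) / π (ys j)))
        - (1 - ρ (ys (⟨0, hn0⟩ : Fin n)) / π (ys (⟨0, hn0⟩ : Fin n)))) := by
    have h1 := hTform (⟨0, hn0⟩ : Fin n) hk0lt
    set ys0 : Fin n → Y := fun j => if (j : ℕ) = 0 then a else b with hys0
    have hys00 : ys0 (⟨0, hn0⟩ : Fin n) = a := by simp [hys0]
    have hys01 : ys0 (⟨1, by omega⟩ : Fin n) = b := by simp [hys0]
    have hChebpos : 0 < ∑ j ∈ SPO.tl n ((⟨0, hn0⟩ : Fin n) : ℕ),
        (Real.exp (r (ys0 j)) / (∑ i ∈ SPO.tl n ((⟨0, hn0⟩ : Fin n) : ℕ), Real.exp (r (ys0 i)))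
          - π (ys0 j) ^ α / (∑ i ∈ SPO.tl n ((⟨0, hn0⟩ : Fin n) : ℕ), π (ys0 i) ^ α))
          * (ρ (ys0 j) / π (ys0 j)) := by
      refine SPO.cheb_pos (SPO.tl n ((⟨0, hn0⟩ : Fin n) : ℕ)) (fun j => π (ys0 j) ^ α)
        (fun j => Real.exp (r (ys0 j))) (fun j => ρ (ys0 j) / π (ys0 j))
        (fun j _ => hπα (ys0 j)) (fun j _ => Real.exp_pos _)
        (SPO.tl_nonempty (⟨0, hn0⟩ : Fin n).isLt)
        (fun i _ l _ => hsign (ys0 i) (ys0 l)) ?_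
      refine ⟨(⟨0, hn0⟩ : Fin n), SPO.mem_tl.2 (Nat.zero_le _), (⟨1, by omega⟩ : Fin n),
        SPO.mem_tl.2 (Nat.zero_le _), ?_⟩
      simp only [hys00, hys01]
      exact hsign' a b hab
    have h2 : 0 < ∑ ys : Fin n → Y, (D ys * μ (⟨0, hn0⟩ : Fin n) ys / pPL ys *
          ∏ m ∈ Finset.univ.filter (fun m : Fin n => (m : ℕ) < ((⟨0, hn0⟩ : Fin n) : ℕ)),
            Real.exp (r (ys m)) / ∑ i ∈ SPO.tl n (m : ℕ), Real.exp (r (ys i)))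
        * ∑ j ∈ SPO.tl n ((⟨0, hn0⟩ : Fin n) : ℕ),
            (Real.exp (r (ys j)) / (∑ i ∈ SPO.tl n ((⟨0, hn0⟩ : Fin n) : ℕ),
                Real.exp (r (ys i)))
              - π (ys j) ^ α / (∑ i ∈ SPO.tl n ((⟨0, hn0⟩ : Fin n) : ℕ), π (ys i) ^ α))
              * (ρ (ys j) / π (ys j)) := by
      refine Finset.sum_pos'
        (fun ys _ => mul_nonneg (hCoeff _ ys hk0lt).le (hChebNN _ ys)) ⟨ys0, Finset.mem_univ _, ?_⟩
      exact mul_pos (hCoeff _ ys0 hk0lt) hChebpos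
    by_contra hneg
    push_neg at hneg
    nlinarith [hGcard ((⟨0, hn0⟩ : Fin n) : ℕ), h1, h2]
  exact Finset.sum_pos' hTnn ⟨(⟨0, hn0⟩ : Fin n), hk0mem, hT0⟩
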